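/- arXiv:0902.0620 — 4 statements merged into one kernel-verified Lean document; each statement's English description precedes it below -/
import Mathlib

section
/- For every n ≥ 3 there exists a proportional division scenario witnessing only n envy-free-relations: there exist valuations v_1,…,v_n (given as an n×n matrix of values v_i(C_j) with each row summing to 1 and all entries positive) such that v_i(C_i) = 1/n for all i, and for each i there is exactly one j ≠ i with v_i(C_j) < v_i(C_i), while v_i(C_k) > v_i(C_i) for all other k ∉ {i, j}. -/
/-- For every n ≥ 3 there is a proportional division scenario
(given abstractly by a valuation matrix with positive entries and rows summing
to 1) witnessing only n envy-free-relations: v_i(C_i) = 1/n, exactly one j ≠ i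
with v_i(C_j) < v_i(C_i), and v_i(C_k) > v_i(C_i) for all other k. -/
theorem worst_case_proportional_division_exists (n : ℕ) (hn : 3 ≤ n) :
    ∃ a : Fin n → Fin n → ℝ,
      (∀ i j, 0 < a i j) ∧
      (∀ i, ∑ j, a i j = 1) ∧
      (∀ i, a i i = 1 / n) ∧
      (∀ i : Fin n, ∃ j : Fin n, j ≠ i ∧ a i j < a i i ∧
        ∀ k : Fin n, k ≠ i → k ≠ j → a i k > a i i) := by
  have hn0 : 0 < n := by omega
  have hnR : (3:ℝ) ≤ n := by exact_mod_cast hn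
  have hnpos : (0:ℝ) < n := by linarith
  haveI : NeZero n := ⟨by omega⟩
  have hne : ∀ i : Fin n, i + 1 ≠ i := by
    intro i h
    have h1 : (1 : Fin n) = 0 := by
      have : i + 1 = i + 0 := by rw [add_zero]; exact h
      exact add_left_cancel this
    rw [Fin.one_eq_zero_iff] at h1
    omega
  refine ⟨fun i j => if j = i then 1/n else if j = i+1 then 2/n^2 else (n+1)/n^2,
    ?_, ?_, ?_, ?_⟩
  · intro i j
    dsimp only
    split_ifs <;> positivity
  · intro i
    have hfun : ∀ j : Fin n, (if j = i then (1/n:ℝ) else if j = i+1 then 2/n^2 else (n+1)/n^2)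
        = (n+1)/n^2 + ((if j = i then (-1/n^2:ℝ) else 0) + (if j = i+1 then ((1-n)/n^2:ℝ) else 0)) := by
      intro j
      by_cases h1 : j = i
      · subst h1
        rw [if_pos rfl, if_pos rfl, if_neg (fun hh => hne j hh.symm)]
        field_simp
        ring
      · by_cases h2 : j = i + 1
        · subst h2
          rw [if_neg h1, if_pos rfl, if_neg h1, if_pos rfl]
          ring
        · rw [if_neg h1, if_neg h2, if_neg h1, if_neg h2]
          ring
    simp only [hfun]
    rw [Finset.sum_add_distrib, Finset.sum_add_distrib, Finset.sum_const,
      Finset.sum_ite_eq' Finset.univ i, Finset.sum_ite_eq' Finset.univ (i+1)]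
    simp only [Finset.mem_univ, if_pos, Finset.card_univ, Fintype.card_fin, nsmul_eq_mul]
    field_simp
    ring
  · intro i; simp
  · intro i
    refine ⟨i+1, hne i, ?_, ?_⟩
    · dsimp only
      rw [if_neg (hne i), if_pos rfl, if_pos rfl]
      rw [div_lt_div_iff₀ (by positivity) hnpos]
      nlinarith
    · intro k hk1 hk2
      dsimp only
      rw [if_neg hk1, if_neg hk2, if_pos rfl]
      rw [gt_iff_lt, div_lt_div_iff₀ hnpos (by positivity)]
      nlinarith
end

section
/- Define d : ℕ → ℕ by d(1) = 0 and d(n) = d(⌊n/2⌋) + d(⌈n/2⌉) + n for n ≥ 2. Then for all n ≥ 1, d(n) = n·⌊log₂ n⌋ + 2n − 2^{⌊log₂ n⌋+1}. -/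
/-- The Divide and Conquer recurrence d(1)=0,
d(n)=d(⌊n/2⌋)+d(⌈n/2⌉)+n has closed form d(n) = n⌊log₂ n⌋ + 2n − 2^{⌊log₂ n⌋+1}. -/
theorem divide_and_conquer_closed_form
    (d : ℕ → ℕ)
    (h1 : d 1 = 0)
    (hrec : ∀ n, 2 ≤ n → d n = d (n / 2) + d ((n + 1) / 2) + n) :
    ∀ n, 1 ≤ n → d n = n * Nat.log 2 n + 2 * n - 2 ^ (Nat.log 2 n + 1) := by
  intro n
  induction n using Nat.strong_induction_on with
  | _ n ih =>
    intro hn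
    rcases eq_or_lt_of_le hn with h | h2
    · -- n = 1
      rw [← h]
      simp [h1]
    · -- n ≥ 2
      have hl : 2 ^ Nat.log 2 n ≤ n := Nat.pow_log_le_self 2 (by omega)
      have hu : n < 2 ^ (Nat.log 2 n + 1) := Nat.lt_pow_succ_log_self (by norm_num) n
      have hk1 : 1 ≤ Nat.log 2 n := by
        rw [Nat.le_log_iff_pow_le (by norm_num) (by omega)]
        simp only [pow_one]; omega
      obtain ⟨j, hj⟩ : ∃ j, Nat.log 2 n = j + 1 := ⟨Nat.log 2 n - 1, by omega⟩
      rw [hj] at hl hu ⊢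
      set a := n / 2 with ha
      set b := (n + 1) / 2 with hb
      have hab : a + b = n := by omega
      have hp1 : (2:ℕ) ^ (j + 1) = 2 * 2 ^ j := by ring
      have hp2 : (2:ℕ) ^ (j + 1 + 1) = 4 * 2 ^ j := by ring
      -- bounds on a, b
      have haL : 2 ^ j ≤ a := by omega
      have haU : a < 2 ^ (j + 1) := by omega
      have hbL : 2 ^ j ≤ b := by omega
      have hbU : b ≤ 2 ^ (j + 1) := by omega
      have ha1 : 1 ≤ a := le_trans Nat.one_le_two_pow haL
      have hb1 : 1 ≤ b := le_trans Nat.one_le_two_pow hbL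
      have hloga : Nat.log 2 a = j := Nat.log_eq_of_pow_le_of_lt_pow haL haU
      have da : d a = a * j + 2 * a - 2 * 2 ^ j := by
        rw [ih a (by omega) ha1, hloga, hp1]
      have db : d b = b * j + 2 * b - 2 * 2 ^ j := by
        rcases lt_or_eq_of_le hbU with hlt | heq
        · rw [ih b (by omega) hb1, Nat.log_eq_of_pow_le_of_lt_pow hbL hlt, hp1]
        · have hlogb : Nat.log 2 b = j + 1 := by rw [heq, Nat.log_pow (by norm_num)]
          rw [ih b (by omega) hb1, hlogb, hp2]
          have e1 : b * (j + 1) = b * j + b := by ring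
          rw [e1]
          omega
      rw [hrec n (by omega), da, db, hp2]
      have hsum : a * j + b * j = n * j := by rw [← add_mul, hab]
      have hnj : n * (j + 1) = n * j + n := by ring
      rw [hnj]
      set A := a * j with hA
      set B := b * j with hB
      set N := n * j with hN
      set P := (2:ℕ) ^ j with hP
      clear_value A B N P
      omega
end

section
/- For all integers n ≥ 5, ⌈n²/2⌉ + 1 > n·⌊log₂ n⌋ + 2n − 2^{⌊log₂ n⌋+1}; that is, the DGEF of the new protocol exceeds the DGEF of the Divide and Conquer protocol. -/
lemma aux_two_pow (m : ℕ) (hm : 3 ≤ m) : 2 * m + 2 ≤ 2 ^ m := by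
  induction m with
  | zero => omega
  | succ k ih =>
    rcases Nat.lt_or_ge k 3 with h | h
    · have hk2 : k = 2 := by omega
      subst hk2; norm_num
    · have := ih (by omega)
      have h2 : 2 ^ (k+1) = 2 * 2 ^ k := by ring
      omega

/-- For n ≥ 5, the DGEF ⌈n²/2⌉ + 1 of the new protocol exceeds the
DGEF n⌊log₂ n⌋ + 2n − 2^{⌊log₂ n⌋+1} of the Divide and Conquer protocol. -/
theorem new_protocol_beats_divide_and_conquer (n : ℕ) (hn : 5 ≤ n) :
    n * Nat.log 2 n + 2 * n - 2 ^ (Nat.log 2 n + 1) < (n ^ 2 + 1) / 2 + 1 := by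
  rcases eq_or_lt_of_le hn with h5 | h6
  · have h5' : n = 5 := h5.symm
    subst h5'
    norm_num [show Nat.log 2 5 = 2 from
      Nat.log_eq_of_pow_le_of_lt_pow (by norm_num) (by norm_num)]
  · -- n ≥ 6
    have h6 : 6 ≤ n := h6
    set k := Nat.log 2 n with hk
    have h2k : 2 ^ k ≤ n := Nat.pow_log_le_self 2 (by omega)
    have hlt : n < 2 ^ (k + 1) := Nat.lt_pow_succ_log_self (by norm_num) n
    have hk2 : 2 ≤ k := by
      have : Nat.log 2 4 ≤ Nat.log 2 n := Nat.log_mono_right (by omega)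
      have h4 : Nat.log 2 4 = 2 :=
        Nat.log_eq_of_pow_le_of_lt_pow (by norm_num) (by norm_num)
      omega
    have hkn : 2 * k + 2 ≤ n := by
      rcases Nat.lt_or_ge k 3 with h | h
      · have : k = 2 := by omega
        omega
      · have := aux_two_pow k h
        omega
    -- multiply hkn by n
    have hmul : 2 * (n * k) + 2 * n ≤ n * n := by
      calc 2 * (n * k) + 2 * n = n * (2 * k + 2) := by ring
        _ ≤ n * n := Nat.mul_le_mul_left n hkn
    have hq : n * n ≤ 2 * ((n ^ 2 + 1) / 2) + 1 := by
      have h1 := Nat.div_add_mod (n ^ 2 + 1) 2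
      have h2 : (n ^ 2 + 1) % 2 < 2 := Nat.mod_lt _ (by norm_num)
      have h3 : n ^ 2 = n * n := sq n
      omega
    have hpow2 : 2 ^ (k + 1) ≤ 2 * n := by
      have : 2 ^ (k + 1) = 2 * 2 ^ k := by ring
      omega
    -- abstract the nonlinear terms
    obtain ⟨a, ha⟩ : ∃ a, n * k = a := ⟨_, rfl⟩
    obtain ⟨p, hp⟩ : ∃ p, 2 ^ (k + 1) = p := ⟨_, rfl⟩
    obtain ⟨q, hqe⟩ : ∃ q, (n ^ 2 + 1) / 2 = q := ⟨_, rfl⟩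
    obtain ⟨m, hm⟩ : ∃ m, n * n = m := ⟨_, rfl⟩
    rw [ha, hp, hqe]
    rw [ha, hm] at hmul
    rw [hqe, hm] at hq
    rw [hp] at hlt hpow2
    omega
end

section
/- In the new protocol, if all players follow the rules, every player's final portion is worth at least 1/n of the whole cake according to his or her own measure: formally, if at each stage with s remaining players each remaining player values the current subcake C' at least s/n (of C), and a departing player receives a piece he values exactly 1/s of C', then every departing player's portion is worth at least (1/s)·(s/n) = 1/n of C, and the invariant v_i(C'') ≥ (s−2)/n is preserved for the next stage with s−2 players. -/
/-- Proportionality invariant of the new protocol. If with s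
remaining players each remaining player values the current subcake C' at least
s/n, and a departing player receives a piece he values exactly (1/s)·v(C')
while every remaining player values each departing piece at most (1/s)·v(C'),
then the departing player's portion is worth at least 1/n of the cake, and the
invariant v(C'') ≥ (s−2)/n holds for the next stage with s−2 players. -/
theorem proportionality_invariant
    (n s : ℕ) (hn : 0 < n) (hs : 2 ≤ s) (hsn : s ≤ n)
    (vRecC' vRemC' p1 p2 : ℝ)
    (hrec : vRecC' ≥ (s : ℝ) / n)
    (hrem : vRemC' ≥ (s : ℝ) / n)
    (hp1 : p1 ≤ vRemC' / s) (hp2 : p2 ≤ vRemC' / s) :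
    (1 / (s : ℝ)) * vRecC' ≥ 1 / n ∧
    vRemC' - p1 - p2 ≥ ((s : ℝ) - 2) / n := by
  have hs0 : (0:ℝ) < s := by exact_mod_cast lt_of_lt_of_le two_pos hs
  have hn0 : (0:ℝ) < n := by exact_mod_cast hn
  constructor
  · have : (1/(s:ℝ)) * vRecC' ≥ (1/(s:ℝ)) * ((s:ℝ)/n) :=
      mul_le_mul_of_nonneg_left hrec (by positivity)
    calc (1/(s:ℝ)) * vRecC' ≥ (1/(s:ℝ)) * ((s:ℝ)/n) := this
      _ = 1/n := by field_simp
  · have key : vRemC' - p1 - p2 ≥ vRemC' * (1 - 2 / s) := by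
      have : vRemC' * (1 - 2 / s) = vRemC' - vRemC' / s - vRemC' / s := by
        field_simp; ring
      rw [this]; linarith
    have hpos : (0:ℝ) ≤ 1 - 2 / s := by
      have : (2:ℝ) ≤ s := by exact_mod_cast hs
      rw [sub_nonneg, div_le_one hs0]; exact this
    calc vRemC' - p1 - p2 ≥ vRemC' * (1 - 2 / s) := key
      _ ≥ ((s:ℝ)/n) * (1 - 2/s) := mul_le_mul_of_nonneg_right hrem hpos
      _ = ((s:ℝ) - 2) / n := by field_simp
end
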